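/- arXiv:2202.07679 — 5 statements merged into one kernel-verified Lean document; each statement's English description precedes it below -/
import Mathlib

section
/- Fix z ∈ ℝ^d at which g is continuous. For any sequence of bandwidths b_m > 0 with b_m → 0 as m → ∞, lim_{m → ∞} m·b_m^d·Var(ĝ_{b_m}(z)) = g(z)·∫ φ(x)² dx, where ĝ_{b_m} is the estimator built from m i.i.d. samples. -/
open MeasureTheory ProbabilityTheory Filter


lemma aux_sub_smul_integral {d : ℕ} (f : (Fin d → ℝ) → ℝ) (z : Fin d → ℝ) {c : ℝ} (hc : 0 ≤ c) :
    ∫ u, f (z - c • u) = (c ^ d)⁻¹ * ∫ x, f x := by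
  calc ∫ u, f (z - c • u) = ∫ u, (fun y => f (z - y)) (c • u) := rfl
    _ = (c ^ Module.finrank ℝ (Fin d → ℝ))⁻¹ • ∫ y, f (z - y) :=
        Measure.integral_comp_smul_of_nonneg volume (fun y => f (z - y)) c (hR := hc)
    _ = (c ^ d)⁻¹ * ∫ x, f x := by
        rw [integral_sub_left_eq_self f volume z]
        simp [smul_eq_mul]

lemma aux_qmp {d : ℕ} (z : Fin d → ℝ) {c : ℝ} (hc : c ≠ 0) :
    Measure.QuasiMeasurePreserving (fun u : Fin d → ℝ => z - c • u) volume volume := by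
  have hsm : Measurable fun u : Fin d → ℝ => c • u := measurable_id.const_smul c
  have h1 : MeasurePreserving (fun y : Fin d → ℝ => z - y) volume volume :=
    Measure.measurePreserving_sub_left volume z
  refine ⟨measurable_const.sub hsm, ?_⟩
  have h2 : (fun u : Fin d → ℝ => z - c • u) = (fun y => z - y) ∘ (fun u : Fin d → ℝ => c • u) := rfl
  rw [h2, ← Measure.map_map h1.measurable hsm, Measure.map_addHaar_smul volume hc,
    Measure.map_smul, h1.map_eq]
  exact Measure.AbsolutelyContinuous.rfl.smul_left _

lemma aux_withDensity {d : ℕ} (g : (Fin d → ℝ) → ℝ) (hgnn : ∀ x, 0 ≤ g x)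
    (hgaem : AEMeasurable g volume) (h : (Fin d → ℝ) → ℝ) :
    ∫ x, h x ∂(volume.withDensity fun x => ENNReal.ofReal (g x)) = ∫ x, g x * h x := by
  have e : (volume.withDensity fun x => ENNReal.ofReal (g x))
      = volume.withDensity fun x => ((fun x => (g x).toNNReal) x : ENNReal) := rfl
  rw [e, integral_withDensity_eq_integral_smul₀ hgaem.real_toNNReal h]
  congr 1; funext x
  simp [NNReal.smul_def, Real.coe_toNNReal _ (hgnn x)]


/-- Kernel density estimator `ĝ_b(z) = (1/(m b^d)) Σ_{i<m} φ((z − Z_i)/b)`. -/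
noncomputable def kde {Ω : Type*} (d m : ℕ) (φ : (Fin d → ℝ) → ℝ)
    (Z : ℕ → Ω → (Fin d → ℝ)) (b : ℝ) (z : Fin d → ℝ) (ω : Ω) : ℝ :=
  (1 / (m * b ^ d)) * ∑ i ∈ Finset.range m, φ (b⁻¹ • (z - Z i ω))

/-- exact asymptotics of the variance,
`lim_{m→∞} m·b_m^d·Var(ĝ_{b_m}(z)) = g(z)·∫φ²` when `b_m → 0`. -/
theorem stmt_3
    {Ω : Type*} [MeasurableSpace Ω] (P : Measure Ω) [IsProbabilityMeasure P]
    (d : ℕ) (hd : 1 ≤ d)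
    (φ : (Fin d → ℝ) → ℝ)
    (hφmeas : Measurable φ) (hφnn : ∀ x, 0 ≤ φ x)
    (hφprob : ∫ x, φ x = 1)
    (hφsq : Integrable fun x => φ x ^ 2)
    (g : (Fin d → ℝ) → ℝ) (hgnn : ∀ x, 0 ≤ g x)
    (hgprob : ∫ x, g x = 1)
    (hgbdd : BddAbove (Set.range g))
    (Z : ℕ → Ω → (Fin d → ℝ)) (hZmeas : ∀ i, Measurable (Z i))
    (hindep : iIndepFun Z P)
    (hlaw : ∀ i, Measure.map (Z i) P = volume.withDensity fun x => ENNReal.ofReal (g x))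
    (z : Fin d → ℝ) (hgz : ContinuousAt g z)
    (b : ℕ → ℝ) (hbpos : ∀ m, 0 < b m) (hb0 : Tendsto b atTop (nhds 0)) :
    Tendsto (fun m : ℕ => (m : ℝ) * b m ^ d * variance (kde d m φ Z (b m) z) P)
      atTop (nhds (g z * ∫ x, φ x ^ 2)) := by
  obtain ⟨M, hM⟩ := hgbdd
  have hMub : ∀ x, g x ≤ M := fun x => hM ⟨x, rfl⟩
  have hM0 : 0 ≤ M := le_trans (hgnn z) (hMub z)
  have hgint : Integrable g := by
    by_contra h
    rw [integral_undef h] at hgprob; norm_num at hgprob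
  have hφint : Integrable φ := by
    by_contra h
    rw [integral_undef h] at hφprob; norm_num at hφprob
  have hgaem : AEMeasurable g volume := hgint.aemeasurable
  set A : ℝ → ℝ := fun c => ∫ u, φ u ^ 2 * g (z - c • u) with hA_def
  set B : ℝ → ℝ := fun c => ∫ u, φ u * g (z - c • u) with hB_def
  -- Key identity
  have key : ∀ m : ℕ, 1 ≤ m →
      (m : ℝ) * b m ^ d * variance (kde d m φ Z (b m) z) P
        = A (b m) - (b m) ^ d * (B (b m)) ^ 2 := by
    intro m hm
    set c : ℝ := b m with hc_def
    have hc : 0 < c := hbpos m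
    have hcd : (0 : ℝ) < c ^ d := pow_pos hc d
    set T : (Fin d → ℝ) → (Fin d → ℝ) := fun x => c⁻¹ • (z - x) with hT_def
    have hT : Measurable T := (measurable_const.sub measurable_id).const_smul c⁻¹
    set X : ℕ → Ω → ℝ := fun i ω => φ (T (Z i ω)) with hX_def
    have hXmeas : ∀ i, Measurable (X i) := fun i => (hφmeas.comp hT).comp (hZmeas i)
    -- expectations of test functions against the law
    have hint : ∀ (h : (Fin d → ℝ) → ℝ), Measurable h → ∀ i,
        ∫ ω, h (Z i ω) ∂P = ∫ x, g x * h x := by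
      intro h hh i
      have e1 : ∫ y, h y ∂(Measure.map (Z i) P) = ∫ ω, h (Z i ω) ∂P :=
        integral_map (hZmeas i).aemeasurable hh.aestronglyMeasurable
      rw [hlaw i] at e1
      rw [← e1, aux_withDensity g hgnn hgaem h]
    -- substitution computations
    have hEX2 : ∀ i, ∫ ω, X i ω ^ 2 ∂P = c ^ d * A c := by
      intro i
      have h1 := hint (fun x => φ (T x) ^ 2) ((hφmeas.comp hT).pow_const 2) i
      have h2 := aux_sub_smul_integral (fun x => g x * φ (T x) ^ 2) z hc.le
      have h3 : (∫ u, (fun x => g x * φ (T x) ^ 2) (z - c • u)) = A c := by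
        rw [hA_def]
        congr 1; funext u
        simp only [hT_def, sub_sub_cancel, inv_smul_smul₀ hc.ne']
        ring
      have h4 : ∫ x, g x * φ (T x) ^ 2 = c ^ d * A c := by
        rw [h3] at h2
        field_simp at h2 ⊢
        linarith
      rw [← h4, ← h1]
    have hEX : ∀ i, ∫ ω, X i ω ∂P = c ^ d * B c := by
      intro i
      have h1 := hint (fun x => φ (T x)) (hφmeas.comp hT) i
      have h2 := aux_sub_smul_integral (fun x => g x * φ (T x)) z hc.le
      have h3 : (∫ u, (fun x => g x * φ (T x)) (z - c • u)) = B c := by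
        rw [hB_def]
        congr 1; funext u
        simp only [hT_def, sub_sub_cancel, inv_smul_smul₀ hc.ne']
        ring
      have h4 : ∫ x, g x * φ (T x) = c ^ d * B c := by
        rw [h3] at h2
        field_simp at h2 ⊢
        linarith
      rw [← h4, ← h1]
    -- integrability / Memℒp
    have hMem : ∀ i, MemLp (X i) 2 P := by
      intro i
      refine (memLp_two_iff_integrable_sq (hXmeas i).aestronglyMeasurable).2 ?_
      have s1 : Integrable (fun y : Fin d → ℝ => φ (c⁻¹ • y) ^ 2) volume :=
        (integrable_comp_smul_iff volume (fun u => φ u ^ 2) (inv_ne_zero hc.ne')).2 hφsq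
      have s2 : Integrable (fun x : Fin d → ℝ => φ (T x) ^ 2) volume :=
        (integrable_comp_sub_left (fun y => φ (c⁻¹ • y) ^ 2) z).2 s1
      have hle : (volume.withDensity fun x => ENNReal.ofReal (g x))
          ≤ ENNReal.ofReal M • (volume : Measure (Fin d → ℝ)) := by
        rw [← withDensity_const]
        exact withDensity_mono (ae_of_all _ fun x => ENNReal.ofReal_le_ofReal (hMub x))
      have s3 : Integrable (fun x : Fin d → ℝ => φ (T x) ^ 2)
          (ENNReal.ofReal M • (volume : Measure (Fin d → ℝ))) :=
        s2.smul_measure ENNReal.ofReal_ne_top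
      have s4 : Integrable (fun x : Fin d → ℝ => φ (T x) ^ 2)
          (volume.withDensity fun x => ENNReal.ofReal (g x)) := s3.mono_measure hle
      have s5 : Integrable (fun x : Fin d → ℝ => φ (T x) ^ 2) (Measure.map (Z i) P) := by
        rw [hlaw i]; exact s4
      exact (integrable_map_measure ((hφmeas.comp hT).pow_const 2).aestronglyMeasurable
        (hZmeas i).aemeasurable).1 s5
    -- variance of each X i
    have hVar : ∀ i, variance (X i) P = c ^ d * A c - (c ^ d * B c) ^ 2 := by
      intro i
      rw [variance_eq_sub (hMem i)]
      simp only [Pi.pow_apply]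
      rw [hEX2 i, hEX i]
    -- independence
    have hXindep : Set.Pairwise ↑(Finset.range m) fun i j => IndepFun (X i) (X j) P := by
      intro i _ j _ hij
      exact (hindep.comp (fun _ x => φ (T x)) (fun _ => hφmeas.comp hT)).indepFun hij
    -- variance of the sum
    have hsum : variance (∑ i ∈ Finset.range m, X i) P
        = (m : ℝ) * (c ^ d * A c - (c ^ d * B c) ^ 2) := by
      rw [IndepFun.variance_sum (fun i _ => hMem i) hXindep]
      simp [hVar, Finset.sum_const, nsmul_eq_mul]
      ring
    -- assemble
    have hkde : kde d m φ Z c z = fun ω => (1 / (m * c ^ d)) * (∑ i ∈ Finset.range m, X i) ω := by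
      funext ω
      simp [kde, hX_def, hT_def, Finset.sum_apply]
    rw [hkde, variance_const_mul, hsum]
    have hm0 : (m : ℝ) ≠ 0 := Nat.cast_ne_zero.2 (by omega)
    field_simp
  -- limits
  have hA : Tendsto (fun n => A (b n)) atTop (nhds (g z * ∫ x, φ x ^ 2)) := by
    have hlim : g z * ∫ x, φ x ^ 2 = ∫ u, φ u ^ 2 * g z := by
      rw [integral_mul_const]; ring
    rw [hlim]
    apply tendsto_integral_of_dominated_convergence (bound := fun u => M * φ u ^ 2)
    · intro n
      exact ((hφmeas.pow_const 2).aemeasurable.mul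
        (hgaem.comp_quasiMeasurePreserving (aux_qmp z (hbpos n).ne'))).aestronglyMeasurable
    · exact hφsq.const_mul M
    · intro n
      refine ae_of_all _ fun u => ?_
      rw [Real.norm_eq_abs, abs_of_nonneg (mul_nonneg (sq_nonneg _) (hgnn _)), mul_comm M]
      exact mul_le_mul_of_nonneg_left (hMub _) (sq_nonneg _)
    · refine ae_of_all _ fun u => ?_
      have h1 : Tendsto (fun n => z - b n • u) atTop (nhds z) := by
        have := tendsto_const_nhds (x := z) (f := atTop (α := ℕ)) |>.sub (hb0.smul_const u)
        simpa using this
      exact tendsto_const_nhds.mul (hgz.tendsto.comp h1)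
  have hBbd : ∀ n, |B (b n)| ≤ M := by
    intro n
    have h1 : ‖∫ u, φ u * g (z - b n • u)‖ ≤ ∫ u, φ u * M := by
      refine norm_integral_le_of_norm_le (hφint.mul_const M) (ae_of_all _ fun u => ?_)
      rw [Real.norm_eq_abs, abs_of_nonneg (mul_nonneg (hφnn _) (hgnn _))]
      exact mul_le_mul_of_nonneg_left (hMub _) (hφnn _)
    rw [Real.norm_eq_abs] at h1
    calc |B (b n)| ≤ ∫ u, φ u * M := h1
      _ = M := by rw [integral_mul_const, hφprob, one_mul]
  have hB : Tendsto (fun n => (b n) ^ d * (B (b n)) ^ 2) atTop (nhds 0) := by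
    have hub : ∀ n, (b n) ^ d * (B (b n)) ^ 2 ≤ (b n) ^ d * M ^ 2 := by
      intro n
      refine mul_le_mul_of_nonneg_left ?_ (pow_nonneg (hbpos n).le d)
      have := abs_le.1 (hBbd n)
      exact sq_le_sq' (by linarith [this.1]) this.2
    have hlim : Tendsto (fun n => (b n) ^ d * M ^ 2) atTop (nhds 0) := by
      have h1 : Tendsto (fun n => (b n) ^ d) atTop (nhds 0) := by
        have := hb0.pow d
        simpa [zero_pow (by omega : d ≠ 0)] using this
      simpa using h1.mul_const (M ^ 2)
    exact squeeze_zero (fun n => mul_nonneg (pow_nonneg (hbpos n).le d) (sq_nonneg _)) hub hlim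
  have hfinal : Tendsto (fun n => A (b n) - (b n) ^ d * (B (b n)) ^ 2) atTop
      (nhds (g z * ∫ x, φ x ^ 2)) := by
    simpa using hA.sub hB
  refine hfinal.congr' ?_
  filter_upwards [eventually_ge_atTop 1] with m hm
  exact (key m hm).symm
end

section
/- For every z ∈ ℝ^d there exists a constant B > 0, depending only on ‖g‖_∞, ∫ φ(x)² dx, and φ(0), such that for every bandwidth b > 0, every sample size m ≥ 1, and every ε ∈ (0, 1], P{|ĝ_b(z) − E[ĝ_b(z)]| > ε} ≤ 2·exp(−B·m·b^d·ε²). -/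
open MeasureTheory ProbabilityTheory

lemma integrable_of_abs_le' {Ω : Type*} [MeasurableSpace Ω] {P : Measure Ω} [IsFiniteMeasure P]
    {h : Ω → ℝ} (hm : Measurable h) (C : ℝ) (hb : ∀ ω, |h ω| ≤ C) : Integrable h P :=
  (memLp_top_of_bound hm.aestronglyMeasurable C
    (Filter.Eventually.of_forall fun ω => by simpa [Real.norm_eq_abs] using hb ω)).integrable le_top

lemma mgf_le_of_abs_le' {Ω : Type*} [MeasurableSpace Ω] {P : Measure Ω} [IsProbabilityMeasure P]
    {Y : Ω → ℝ} (hY : Measurable Y) {M t v : ℝ}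
    (hbdd : ∀ ω, |Y ω| ≤ M) (hmean : ∫ ω, Y ω ∂P = 0) (hvar : ∫ ω, (Y ω) ^ 2 ∂P ≤ v)
    (htM : |t| * M ≤ 1) : mgf Y P t ≤ Real.exp (t ^ 2 * v) := by
  have hYint : Integrable Y P := integrable_of_abs_le' hY M hbdd
  have hY2int : Integrable (fun ω => (Y ω) ^ 2) P := by
    refine integrable_of_abs_le' (hY.pow_const 2) (M ^ 2) fun ω => ?_
    rw [abs_pow]
    exact pow_le_pow_left₀ (abs_nonneg _) (hbdd ω) 2
  have hptw : ∀ ω, Real.exp (t * Y ω) ≤ 1 + t * Y ω + t ^ 2 * (Y ω) ^ 2 := by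
    intro ω
    have h1 : |t * Y ω| ≤ 1 := by
      rw [abs_mul]
      calc |t| * |Y ω| ≤ |t| * M := mul_le_mul_of_nonneg_left (hbdd ω) (abs_nonneg t)
        _ ≤ 1 := htM
    have := Real.abs_exp_sub_one_sub_id_le h1
    have h2 : Real.exp (t * Y ω) - 1 - t * Y ω ≤ (t * Y ω) ^ 2 := (abs_le.1 this).2
    nlinarith [sq_nonneg (t * Y ω)]
  have hexpint : Integrable (fun ω => Real.exp (t * Y ω)) P := by
    refine integrable_of_abs_le' (hY.const_mul t).exp (Real.exp (|t| * M)) fun ω => ?_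
    rw [abs_of_pos (Real.exp_pos _), Real.exp_le_exp]
    calc t * Y ω ≤ |t * Y ω| := le_abs_self _
      _ = |t| * |Y ω| := abs_mul _ _
      _ ≤ |t| * M := mul_le_mul_of_nonneg_left (hbdd ω) (abs_nonneg t)
  have hvnn : 0 ≤ v := le_trans (integral_nonneg fun ω => sq_nonneg _) hvar
  calc mgf Y P t = ∫ ω, Real.exp (t * Y ω) ∂P := rfl
    _ ≤ ∫ ω, (1 + t * Y ω + t ^ 2 * (Y ω) ^ 2) ∂P := by
        refine integral_mono hexpint ?_ hptw
        exact ((integrable_const 1).add (hYint.const_mul t)).add (hY2int.const_mul _)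
    _ = (∫ ω, (1 + t * Y ω) ∂P) + ∫ ω, t ^ 2 * (Y ω) ^ 2 ∂P :=
        integral_add ((integrable_const 1).add (hYint.const_mul t)) (hY2int.const_mul _)
    _ = 1 + t ^ 2 * ∫ ω, (Y ω) ^ 2 ∂P := by
        rw [integral_add (integrable_const 1) (hYint.const_mul t), integral_const,
          integral_const_mul, integral_const_mul, hmean, probReal_univ]
        simp
    _ ≤ 1 + t ^ 2 * v := by nlinarith [sq_nonneg t]
    _ ≤ Real.exp (t ^ 2 * v) := by linarith [Real.add_one_le_exp (t ^ 2 * v)]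

lemma one_sided_tail' {Ω : Type*} [MeasurableSpace Ω] (P : Measure Ω) [IsProbabilityMeasure P]
    (m : ℕ) (Y : ℕ → Ω → ℝ) (hmeas : ∀ i, Measurable (Y i))
    (hindep : iIndepFun Y P)
    (M t v ε' : ℝ) (ht : 0 ≤ t)
    (hmgf : ∀ i, mgf (Y i) P t ≤ Real.exp (t ^ 2 * v))
    (hbdd : ∀ i ω, |Y i ω| ≤ M) :
    P {ω | ε' ≤ ∑ i ∈ Finset.range m, Y i ω}
      ≤ ENNReal.ofReal (Real.exp (-t * ε' + m * (t ^ 2 * v))) := by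
  have hSmeas : Measurable (∑ i ∈ Finset.range m, Y i) := by
    have := Finset.measurable_sum (Finset.range m) fun i (_ : i ∈ Finset.range m) => hmeas i
    simpa [← Finset.sum_apply] using this
  have hSbdd : ∀ ω, |(∑ i ∈ Finset.range m, Y i) ω| ≤ m * M := by
    intro ω
    simp only [Finset.sum_apply]
    calc |∑ i ∈ Finset.range m, Y i ω| ≤ ∑ i ∈ Finset.range m, |Y i ω| :=
          Finset.abs_sum_le_sum_abs _ _
      _ ≤ ∑ _i ∈ Finset.range m, M := Finset.sum_le_sum fun i _ => hbdd i ω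
      _ = m * M := by simp [mul_comm]
  have hexpint : Integrable (fun ω => Real.exp (t * (∑ i ∈ Finset.range m, Y i) ω)) P := by
    refine integrable_of_abs_le' (hSmeas.const_mul t).exp (Real.exp (t * (m * M))) fun ω => ?_
    rw [abs_of_pos (Real.exp_pos _), Real.exp_le_exp]
    calc t * (∑ i ∈ Finset.range m, Y i) ω ≤ t * |(∑ i ∈ Finset.range m, Y i) ω| :=
          mul_le_mul_of_nonneg_left (le_abs_self _) ht
      _ ≤ t * (m * M) := mul_le_mul_of_nonneg_left (hSbdd ω) ht
  have hchern := measure_ge_le_exp_mul_mgf (X := ∑ i ∈ Finset.range m, Y i) (μ := P) ε' ht hexpint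
  have hmgfsum : mgf (∑ i ∈ Finset.range m, Y i) P t ≤ Real.exp (m * (t ^ 2 * v)) := by
    rw [hindep.mgf_sum hmeas]
    calc ∏ i ∈ Finset.range m, mgf (Y i) P t ≤ ∏ _i ∈ Finset.range m, Real.exp (t ^ 2 * v) :=
          Finset.prod_le_prod (fun i _ => mgf_nonneg) (fun i _ => hmgf i)
      _ = Real.exp (m * (t ^ 2 * v)) := by
          rw [Finset.prod_const, Finset.card_range, ← Real.exp_nat_mul]
  have hset : {ω | ε' ≤ ∑ i ∈ Finset.range m, Y i ω}
      = {ω | ε' ≤ (∑ i ∈ Finset.range m, Y i) ω} := by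
    ext ω; simp [Finset.sum_apply]
  rw [hset]
  have hfin : P {ω | ε' ≤ (∑ i ∈ Finset.range m, Y i) ω} ≠ ⊤ := measure_ne_top _ _
  rw [← ENNReal.ofReal_toReal hfin]
  refine ENNReal.ofReal_le_ofReal ?_
  calc (P {ω | ε' ≤ (∑ i ∈ Finset.range m, Y i) ω}).toReal
      ≤ Real.exp (-t * ε') * mgf (∑ i ∈ Finset.range m, Y i) P t := hchern
    _ ≤ Real.exp (-t * ε') * Real.exp (m * (t ^ 2 * v)) :=
        mul_le_mul_of_nonneg_left hmgfsum (le_of_lt (Real.exp_pos _))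
    _ = Real.exp (-t * ε' + m * (t ^ 2 * v)) := (Real.exp_add _ _).symm

lemma var_le_second_moment' {α : Type*} [MeasurableSpace α] {μ : Measure α}
    [IsProbabilityMeasure μ] (f : α → ℝ) (hfint : Integrable f μ)
    (hf2 : Integrable (fun x => f x ^ 2) μ) (c : ℝ) (hc : c = ∫ x, f x ∂μ) :
    ∫ x, (f x - c) ^ 2 ∂μ ≤ ∫ x, f x ^ 2 ∂μ := by
  have hexp : ∫ x, (f x - c) ^ 2 ∂μ = (∫ x, f x ^ 2 ∂μ) - c ^ 2 := by
    calc ∫ x, (f x - c) ^ 2 ∂μ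
        = ∫ x, ((f x ^ 2 - (2 * c) * f x) + c ^ 2) ∂μ := by
          congr 1; funext x; ring
      _ = (∫ x, (f x ^ 2 - (2 * c) * f x) ∂μ) + ∫ _x, (c ^ 2 : ℝ) ∂μ :=
          integral_add (hf2.sub (hfint.const_mul _)) (integrable_const _)
      _ = ((∫ x, f x ^ 2 ∂μ) - (2 * c) * ∫ x, f x ∂μ) + c ^ 2 := by
          rw [integral_sub hf2 (hfint.const_mul _), integral_const_mul, integral_const,
            probReal_univ]
          simp
      _ = (∫ x, f x ^ 2 ∂μ) - c ^ 2 := by rw [← hc]; ring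
  nlinarith [sq_nonneg c]

set_option maxHeartbeats 2000000 in
/-- Bernstein-type deviation bound
`P{|ĝ_b(z) − E[ĝ_b(z)]| > ε} ≤ 2·exp(−B·m·b^d·ε²)` for `ε ∈ (0,1]`. -/
theorem stmt_8
    {Ω : Type*} [MeasurableSpace Ω] (P : Measure Ω) [IsProbabilityMeasure P]
    (d : ℕ) (hd : 1 ≤ d)
    (φ : (Fin d → ℝ) → ℝ)
    (hφmeas : Measurable φ) (hφnn : ∀ x, 0 ≤ φ x)
    (hφprob : ∫ x, φ x = 1)
    (hφsq : Integrable fun x => φ x ^ 2)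
    (hφmax : ∀ x, φ x ≤ φ 0)
    (g : (Fin d → ℝ) → ℝ) (hgnn : ∀ x, 0 ≤ g x)
    (hgprob : ∫ x, g x = 1)
    (hgbdd : BddAbove (Set.range g))
    (Z : ℕ → Ω → (Fin d → ℝ)) (hZmeas : ∀ i, Measurable (Z i))
    (hindep : iIndepFun Z P)
    (hlaw : ∀ i, Measure.map (Z i) P = volume.withDensity fun x => ENNReal.ofReal (g x))
    (z : Fin d → ℝ) :
    ∃ B > (0 : ℝ), ∀ b > (0 : ℝ), ∀ m : ℕ, 1 ≤ m → ∀ ε : ℝ, 0 < ε → ε ≤ 1 →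
      P {ω | ε < |kde d m φ Z b z ω - ∫ ω', kde d m φ Z b z ω' ∂P|}
        ≤ ENNReal.ofReal (2 * Real.exp (-B * m * b ^ d * ε ^ 2)) := by
  classical
  obtain ⟨Csup, hCsupdef⟩ : ∃ x : ℝ, x = sSup (Set.range g) := ⟨_, rfl⟩
  have hCsupnn : 0 ≤ Csup := by
    rw [hCsupdef]; exact le_trans (hgnn 0) (le_csSup hgbdd ⟨0, rfl⟩)
  obtain ⟨I2, hI2def⟩ : ∃ x : ℝ, x = ∫ x, φ x ^ 2 := ⟨_, rfl⟩
  have hI2nn : 0 ≤ I2 := by rw [hI2def]; exact integral_nonneg fun x => sq_nonneg _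
  obtain ⟨K, hKdef⟩ : ∃ x : ℝ, x = Csup * I2 + 1 := ⟨_, rfl⟩
  have hKpos : 0 < K := by
    have := mul_nonneg hCsupnn hI2nn; rw [hKdef]; linarith
  obtain ⟨M, hMdef⟩ : ∃ x : ℝ, x = φ 0 + 1 := ⟨_, rfl⟩
  have hMpos : 0 < M := by have := hφnn 0; rw [hMdef]; linarith
  obtain ⟨B, hBdef⟩ : ∃ x : ℝ, x = min (1 / (2 * K)) (1 / M) / 2 := ⟨_, rfl⟩
  have hBpos : 0 < B := by
    have h1 : 0 < 1 / (2 * K) := by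
      apply div_pos one_pos; linarith
    have h2 : 0 < 1 / M := div_pos one_pos hMpos
    rw [hBdef]
    exact div_pos (lt_min h1 h2) two_pos
  refine ⟨B, hBpos, ?_⟩
  intro b hb m hm ε hε hε1
  have hbd : (0 : ℝ) < b ^ d := pow_pos hb d
  have hm1 : (1 : ℝ) ≤ (m : ℝ) := by exact_mod_cast hm
  have hm0 : (0 : ℝ) < (m : ℝ) := lt_of_lt_of_le one_pos hm1
  -- setup
  set f : (Fin d → ℝ) → ℝ := fun x => φ (b⁻¹ • (z - x)) with hfdef
  have hfm : Measurable f :=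
    hφmeas.comp ((measurable_const.sub measurable_id).const_smul b⁻¹)
  have hfnn : ∀ x, 0 ≤ f x := fun x => hφnn _
  have hfle : ∀ x, f x ≤ φ 0 := fun x => hφmax _
  set νg := volume.withDensity fun x => ENNReal.ofReal (g x) with hνdef
  haveI hνprob : IsProbabilityMeasure νg := by
    rw [← hlaw 0]
    exact Measure.isProbabilityMeasure_map (hZmeas 0).aemeasurable
  -- change of variables
  have hf2vol : (∫ x, f x ^ 2 ∂(volume : Measure (Fin d → ℝ))) = b ^ d * I2 := by
    have h1 : (∫ x, f x ^ 2 ∂(volume : Measure (Fin d → ℝ)))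
        = ∫ x, φ (b⁻¹ • x) ^ 2 ∂(volume : Measure (Fin d → ℝ)) :=
      integral_sub_left_eq_self (fun y => φ (b⁻¹ • y) ^ 2) volume z
    rw [h1, MeasureTheory.Measure.integral_comp_inv_smul_of_nonneg volume (fun y => φ y ^ 2) hb.le,
      Module.finrank_fin_fun, smul_eq_mul, hI2def]
  have hf2intvol : Integrable (fun x => f x ^ 2) (volume : Measure (Fin d → ℝ)) := by
    have h2 : Integrable (fun x => φ (b⁻¹ • x) ^ 2) (volume : Measure (Fin d → ℝ)) :=
      (MeasureTheory.integrable_comp_smul_iff volume (fun y => φ y ^ 2)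
        (inv_ne_zero hb.ne')).2 hφsq
    exact h2.comp_sub_left z
  -- second moment under the law
  have hf2νg : ∫ x, f x ^ 2 ∂νg ≤ b ^ d * K := by
    have hle : νg ≤ (ENNReal.ofReal Csup) • (volume : Measure (Fin d → ℝ)) := by
      calc νg ≤ volume.withDensity (fun _ => ENNReal.ofReal Csup) :=
            withDensity_mono (Filter.Eventually.of_forall fun x =>
              ENNReal.ofReal_le_ofReal (by rw [hCsupdef]; exact le_csSup hgbdd ⟨x, rfl⟩))
        _ = (ENNReal.ofReal Csup) • volume := withDensity_const _
    have hLvol : (∫⁻ x, ENNReal.ofReal (f x ^ 2) ∂(volume : Measure (Fin d → ℝ)))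
        = ENNReal.ofReal (b ^ d * I2) := by
      rw [← hf2vol]
      exact (ofReal_integral_eq_lintegral_ofReal hf2intvol
        (Filter.Eventually.of_forall fun x => sq_nonneg _)).symm
    have hmono : (∫⁻ x, ENNReal.ofReal (f x ^ 2) ∂νg)
        ≤ ENNReal.ofReal Csup * ENNReal.ofReal (b ^ d * I2) := by
      calc (∫⁻ x, ENNReal.ofReal (f x ^ 2) ∂νg)
          ≤ ∫⁻ x, ENNReal.ofReal (f x ^ 2) ∂((ENNReal.ofReal Csup) • volume) :=
            lintegral_mono' hle le_rfl
        _ = ENNReal.ofReal Csup * ∫⁻ x, ENNReal.ofReal (f x ^ 2) ∂volume :=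
            lintegral_smul_measure _ _
        _ = ENNReal.ofReal Csup * ENNReal.ofReal (b ^ d * I2) := by rw [hLvol]
    have hstep : ∫ x, f x ^ 2 ∂νg ≤ Csup * (b ^ d * I2) := by
      rw [integral_eq_lintegral_of_nonneg_ae
        (Filter.Eventually.of_forall fun x => sq_nonneg (f x))
        ((hfm.pow_const 2).aestronglyMeasurable)]
      calc (∫⁻ x, ENNReal.ofReal (f x ^ 2) ∂νg).toReal
          ≤ (ENNReal.ofReal Csup * ENNReal.ofReal (b ^ d * I2)).toReal :=
            ENNReal.toReal_mono
              (ENNReal.mul_ne_top ENNReal.ofReal_ne_top ENNReal.ofReal_ne_top) hmono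
        _ = Csup * (b ^ d * I2) := by
            rw [← ENNReal.ofReal_mul hCsupnn,
              ENNReal.toReal_ofReal (mul_nonneg hCsupnn (mul_nonneg hbd.le hI2nn))]
    calc ∫ x, f x ^ 2 ∂νg ≤ Csup * (b ^ d * I2) := hstep
      _ ≤ b ^ d * K := by rw [hKdef]; nlinarith
  -- integrability under the law
  have hfintν : Integrable f νg :=
    integrable_of_abs_le' hfm (φ 0) fun x => by
      rw [abs_of_nonneg (hfnn x)]; exact hfle x
  have hf2intν : Integrable (fun x => f x ^ 2) νg := by
    refine integrable_of_abs_le' (hfm.pow_const 2) (φ 0 ^ 2) fun x => ?_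
    rw [abs_pow, abs_of_nonneg (hfnn x)]
    exact pow_le_pow_left₀ (hfnn x) (hfle x) 2
  obtain ⟨c, hcdef⟩ : ∃ c : ℝ, c = ∫ x, f x ∂νg := ⟨_, rfl⟩
  have hc0 : 0 ≤ c := by rw [hcdef]; exact integral_nonneg hfnn
  have hcle : c ≤ φ 0 := by
    rw [hcdef]
    calc (∫ x, f x ∂νg) ≤ ∫ _x, φ 0 ∂νg := integral_mono hfintν (integrable_const _) hfle
      _ = φ 0 := by simp
  -- variance of the centered variable under the law
  have hvarν : ∫ x, (f x - c) ^ 2 ∂νg ≤ b ^ d * K :=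
    le_trans (var_le_second_moment' f hfintν hf2intν c hcdef) hf2νg
  -- the centered variables
  set Yp : ℕ → Ω → ℝ := fun i => (fun x => f x - c) ∘ Z i with hYpdef
  set Yn : ℕ → Ω → ℝ := fun i => (fun x => c - f x) ∘ Z i with hYndef
  have hYpmeas : ∀ i, Measurable (Yp i) := fun i =>
    (hfm.sub measurable_const).comp (hZmeas i)
  have hYnmeas : ∀ i, Measurable (Yn i) := fun i =>
    (measurable_const.sub hfm).comp (hZmeas i)
  have hYpindep : iIndepFun Yp P :=
    hindep.comp (fun _ => fun x => f x - c) (fun _ => hfm.sub measurable_const)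
  have hYnindep : iIndepFun Yn P :=
    hindep.comp (fun _ => fun x => c - f x) (fun _ => measurable_const.sub hfm)
  have hYpbdd : ∀ i ω, |Yp i ω| ≤ M := by
    intro i ω
    have h1 := hfnn (Z i ω); have h2 := hfle (Z i ω); have h3 := hφnn 0
    show |f (Z i ω) - c| ≤ M
    rw [hMdef, abs_le]; constructor <;> nlinarith
  have hYnbdd : ∀ i ω, |Yn i ω| ≤ M := by
    intro i ω
    have : Yn i ω = -(Yp i ω) := by
      show c - f (Z i ω) = -(f (Z i ω) - c); ring
    rw [this, abs_neg]; exact hYpbdd i ω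
  -- means and variances under P
  have hEf : ∀ i, ∫ ω, f (Z i ω) ∂P = c := by
    intro i
    rw [hcdef, ← hlaw i, integral_map (hZmeas i).aemeasurable hfm.aestronglyMeasurable]
  have hfZint : ∀ i, Integrable (fun ω => f (Z i ω)) P := fun i =>
    integrable_of_abs_le' (hfm.comp (hZmeas i)) (φ 0) fun ω => by
      rw [abs_of_nonneg (hfnn _)]; exact hfle _
  have hYpmean : ∀ i, ∫ ω, Yp i ω ∂P = 0 := by
    intro i
    have h0 : ∫ ω, Yp i ω ∂P = ∫ ω, (f (Z i ω) - c) ∂P := rfl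
    have h1 : ∫ ω, (f (Z i ω) - c) ∂P = (∫ ω, f (Z i ω) ∂P) - ∫ _ω, c ∂P :=
      integral_sub (hfZint i) (integrable_const _)
    rw [h0, h1, hEf i, integral_const, probReal_univ]
    simp
  have hYnmean : ∀ i, ∫ ω, Yn i ω ∂P = 0 := by
    intro i
    have h1 : ∀ ω, Yn i ω = -(Yp i ω) := fun ω => by
      show c - f (Z i ω) = -(f (Z i ω) - c); ring
    calc ∫ ω, Yn i ω ∂P = ∫ ω, -(Yp i ω) ∂P := by congr 1; funext ω; exact h1 ω
      _ = -∫ ω, Yp i ω ∂P := integral_neg _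
      _ = 0 := by rw [hYpmean i]; ring
  have hYpvar : ∀ i, ∫ ω, (Yp i ω) ^ 2 ∂P ≤ b ^ d * K := by
    intro i
    have h0 : ∫ ω, (Yp i ω) ^ 2 ∂P = ∫ x, (f x - c) ^ 2 ∂(Measure.map (Z i) P) :=
      (integral_map (hZmeas i).aemeasurable
        (((hfm.sub measurable_const).pow_const 2).aestronglyMeasurable)).symm
    rw [h0, hlaw i]
    exact hvarν
  have hYnvar : ∀ i, ∫ ω, (Yn i ω) ^ 2 ∂P ≤ b ^ d * K := by
    intro i
    have h1 : ∀ ω, (Yn i ω) ^ 2 = (Yp i ω) ^ 2 := fun ω => by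
      show (c - f (Z i ω)) ^ 2 = (f (Z i ω) - c) ^ 2; ring
    calc ∫ ω, (Yn i ω) ^ 2 ∂P = ∫ ω, (Yp i ω) ^ 2 ∂P := by congr 1; funext ω; exact h1 ω
      _ ≤ b ^ d * K := hYpvar i
  -- parameters
  obtain ⟨t, htdef⟩ : ∃ x : ℝ, x = min (ε / (2 * K)) (1 / M) := ⟨_, rfl⟩
  have ht0 : 0 ≤ t := by
    rw [htdef]
    exact le_min (div_nonneg hε.le (by linarith)) (div_nonneg zero_le_one hMpos.le)
  have htM : |t| * M ≤ 1 := by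
    rw [abs_of_nonneg ht0]
    have h1 : t ≤ 1 / M := by rw [htdef]; exact min_le_right _ _
    calc t * M ≤ (1 / M) * M := mul_le_mul_of_nonneg_right h1 hMpos.le
      _ = 1 := by field_simp
  have hmgfp : ∀ i, mgf (Yp i) P t ≤ Real.exp (t ^ 2 * (b ^ d * K)) := fun i =>
    mgf_le_of_abs_le' (hYpmeas i) (hYpbdd i) (hYpmean i) (hYpvar i) htM
  have hmgfn : ∀ i, mgf (Yn i) P t ≤ Real.exp (t ^ 2 * (b ^ d * K)) := fun i =>
    mgf_le_of_abs_le' (hYnmeas i) (hYnbdd i) (hYnmean i) (hYnvar i) htM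
  -- real-number abbreviations
  obtain ⟨A, hAdef⟩ : ∃ x : ℝ, x = (m : ℝ) * b ^ d := ⟨_, rfl⟩
  have hApos : (0 : ℝ) < A := by rw [hAdef]; exact mul_pos hm0 hbd
  -- expectation of the kde
  have hEkde : ∫ ω', kde d m φ Z b z ω' ∂P = (1 / A) * ((m : ℝ) * c) := by
    have h1 : ∀ ω', kde d m φ Z b z ω' = (1 / A) * ∑ i ∈ Finset.range m, f (Z i ω') := by
      intro ω'
      rw [hAdef]
      rfl
    calc ∫ ω', kde d m φ Z b z ω' ∂P
        = ∫ ω', (1 / A) * ∑ i ∈ Finset.range m, f (Z i ω') ∂P := by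
          congr 1; funext ω'; exact h1 ω'
      _ = (1 / A) * ∫ ω', ∑ i ∈ Finset.range m, f (Z i ω') ∂P := integral_const_mul _ _
      _ = (1 / A) * ∑ i ∈ Finset.range m, ∫ ω', f (Z i ω') ∂P := by
          rw [integral_finset_sum _ (fun i _ => hfZint i)]
      _ = (1 / A) * ((m : ℝ) * c) := by
          rw [Finset.sum_congr rfl fun i _ => hEf i]
          simp [Finset.sum_const, Finset.card_range, mul_comm]
  -- rewrite the deviation event
  have hevent : {ω | ε < |kde d m φ Z b z ω - ∫ ω', kde d m φ Z b z ω' ∂P|}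
      = {ω | ε * A < |∑ i ∈ Finset.range m, Yp i ω|} := by
    ext ω
    simp only [Set.mem_setOf_eq, hEkde]
    have hS : (∑ i ∈ Finset.range m, Yp i ω)
        = (∑ i ∈ Finset.range m, f (Z i ω)) - (m : ℝ) * c := by
      have h2 : ∀ i, Yp i ω = f (Z i ω) - c := fun i => rfl
      rw [Finset.sum_congr rfl fun i _ => h2 i, Finset.sum_sub_distrib, Finset.sum_const,
        Finset.card_range, nsmul_eq_mul]
    have hk : kde d m φ Z b z ω - (1 / A) * ((m : ℝ) * c)
        = (1 / A) * (∑ i ∈ Finset.range m, Yp i ω) := by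
      rw [hS]
      have h1 : kde d m φ Z b z ω = (1 / A) * ∑ i ∈ Finset.range m, f (Z i ω) := by
        rw [hAdef]; rfl
      rw [h1]; ring
    rw [hk, abs_mul, abs_of_pos (one_div_pos.mpr hApos)]
    rw [show (1 / A) * |∑ i ∈ Finset.range m, Yp i ω| = |∑ i ∈ Finset.range m, Yp i ω| / A by
      ring]
    exact lt_div_iff₀ hApos
  rw [hevent]
  -- union bound
  have hsub : {ω | ε * A < |∑ i ∈ Finset.range m, Yp i ω|}
      ⊆ {ω | ε * A ≤ ∑ i ∈ Finset.range m, Yp i ω}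
        ∪ {ω | ε * A ≤ ∑ i ∈ Finset.range m, Yn i ω} := by
    intro ω hω
    have hω' : ε * A < |∑ i ∈ Finset.range m, Yp i ω| := hω
    have hneg : (∑ i ∈ Finset.range m, Yn i ω) = -(∑ i ∈ Finset.range m, Yp i ω) := by
      rw [← Finset.sum_neg_distrib]
      refine Finset.sum_congr rfl fun i _ => ?_
      show c - f (Z i ω) = -(f (Z i ω) - c); ring
    rcases lt_abs.1 hω' with h | h
    · exact Set.mem_union_left _ (le_of_lt h)
    · refine Set.mem_union_right _ ?_
      show ε * A ≤ ∑ i ∈ Finset.range m, Yn i ω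
      rw [hneg]; exact le_of_lt h
  have hbound := measure_union_le (μ := P)
    {ω | ε * A ≤ ∑ i ∈ Finset.range m, Yp i ω} {ω | ε * A ≤ ∑ i ∈ Finset.range m, Yn i ω}
  have htail1 := one_sided_tail' P m Yp hYpmeas hYpindep M t (b ^ d * K) (ε * A) ht0 hmgfp hYpbdd
  have htail2 := one_sided_tail' P m Yn hYnmeas hYnindep M t (b ^ d * K) (ε * A) ht0 hmgfn hYnbdd
  -- final arithmetic
  have harith : -t * (ε * A) + (m : ℝ) * (t ^ 2 * (b ^ d * K)) ≤ -B * m * b ^ d * ε ^ 2 := by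
    have ht1 : t ≤ ε / (2 * K) := by rw [htdef]; exact min_le_left _ _
    have ht2 : 2 * B * ε ≤ t := by
      have hε2K : ε * (1 / (2 * K)) = ε / (2 * K) := by ring
      have h1 : ε * min (1 / (2 * K)) (1 / M) ≤ t := by
        rcases min_cases (1 / (2 * K)) (1 / M) with ⟨heq, h12⟩ | ⟨heq, hle⟩
        · rw [heq, hε2K, htdef]
          refine le_min le_rfl (le_trans ?_ h12)
          have h2K : (0:ℝ) < 2 * K := by linarith
          rw [div_eq_mul_inv, div_eq_mul_inv]
          calc ε * (2 * K)⁻¹ ≤ 1 * (2 * K)⁻¹ :=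
                mul_le_mul_of_nonneg_right hε1 (inv_nonneg.mpr h2K.le)
            _ = 1 * (2 * K)⁻¹ := rfl
        · rw [heq, htdef]
          refine le_min ?_ ?_
          · calc ε * (1 / M) ≤ ε * (1 / (2 * K)) :=
                mul_le_mul_of_nonneg_left hle.le hε.le
              _ = ε / (2 * K) := hε2K
          · calc ε * (1 / M) ≤ 1 * (1 / M) :=
                mul_le_mul_of_nonneg_right hε1 (div_nonneg zero_le_one hMpos.le)
              _ = 1 / M := one_mul _
      calc 2 * B * ε = ε * min (1 / (2 * K)) (1 / M) := by rw [hBdef]; ring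
        _ ≤ t := h1
    have htK : t * K ≤ ε / 2 := by
      calc t * K ≤ (ε / (2 * K)) * K := mul_le_mul_of_nonneg_right ht1 hKpos.le
        _ = ε / 2 := by field_simp
    rw [hAdef]
    nlinarith [mul_le_mul_of_nonneg_left htK
        (mul_nonneg (mul_nonneg hm0.le hbd.le) ht0 : (0:ℝ) ≤ (m : ℝ) * b ^ d * t),
      mul_le_mul_of_nonneg_left ht2
        (by positivity : (0:ℝ) ≤ (m : ℝ) * b ^ d * ε / 2)]
  have hexple : Real.exp (-t * (ε * A) + (m : ℝ) * (t ^ 2 * (b ^ d * K)))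
      ≤ Real.exp (-B * m * b ^ d * ε ^ 2) := Real.exp_le_exp.2 harith
  calc P ({ω | ε * A < |∑ i ∈ Finset.range m, Yp i ω|})
      ≤ P ({ω | ε * A ≤ ∑ i ∈ Finset.range m, Yp i ω}
          ∪ {ω | ε * A ≤ ∑ i ∈ Finset.range m, Yn i ω}) := measure_mono hsub
    _ ≤ P {ω | ε * A ≤ ∑ i ∈ Finset.range m, Yp i ω}
        + P {ω | ε * A ≤ ∑ i ∈ Finset.range m, Yn i ω} := hbound
    _ ≤ ENNReal.ofReal (Real.exp (-t * (ε * A) + m * (t ^ 2 * (b ^ d * K))))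
        + ENNReal.ofReal (Real.exp (-t * (ε * A) + m * (t ^ 2 * (b ^ d * K)))) :=
        add_le_add htail1 htail2
    _ = ENNReal.ofReal (2 * Real.exp (-t * (ε * A) + m * (t ^ 2 * (b ^ d * K)))) := by
        rw [← ENNReal.ofReal_add (Real.exp_pos _).le (Real.exp_pos _).le]; ring_nf
    _ ≤ ENNReal.ofReal (2 * Real.exp (-B * m * b ^ d * ε ^ 2)) :=
        ENNReal.ofReal_le_ofReal (by linarith)
end

section
/- Let K ≥ 1 be an integer and let a_1, …, a_K, â_1, …, â_K, δ_1, …, δ_K be nonnegative reals such that S := Σ_{k'} a_{k'} > 0, |â_k − a_k| ≤ δ_k for every k, and Σ_{k'} δ_{k'} ≤ S/2. Then Σ_{k'} â_{k'} > 0 and for every k ∈ {1, …, K}: |â_k/(Σ_{k'} â_{k'}) − a_k/S| ≤ δ_k/S + 3·(Σ_{k'} δ_{k'})/S. In particular, if δ_k ≤ δ for every k, then |â_k/(Σ_{k'} â_{k'}) − a_k/S| ≤ (3K + 1)·δ/S. -/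
/-- deterministic perturbation lemma for normalized ratios. If
`|â_k − a_k| ≤ δ_k` and `Σ δ_k ≤ (Σ a_k)/2`, then `Σ â_k > 0` and
`|â_k/Σâ − a_k/Σa| ≤ δ_k/Σa + 3·(Σδ)/Σa`; in particular with `δ_k ≤ δ`,
`|â_k/Σâ − a_k/Σa| ≤ (3K+1)·δ/Σa`. -/
theorem stmt_10
    (K : ℕ) (hK : 1 ≤ K)
    (a ahat δ : Fin K → ℝ)
    (ha : ∀ k, 0 ≤ a k) (hahat : ∀ k, 0 ≤ ahat k) (hδ : ∀ k, 0 ≤ δ k)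
    (hS : 0 < ∑ k, a k)
    (hclose : ∀ k, |ahat k - a k| ≤ δ k)
    (hsmall : ∑ k, δ k ≤ (∑ k, a k) / 2) :
    (0 < ∑ k, ahat k) ∧
    (∀ k, |ahat k / (∑ k', ahat k') - a k / (∑ k', a k')|
        ≤ δ k / (∑ k', a k') + 3 * (∑ k', δ k') / (∑ k', a k')) ∧
    (∀ δ₀ : ℝ, (∀ k, δ k ≤ δ₀) → ∀ k,
      |ahat k / (∑ k', ahat k') - a k / (∑ k', a k')|
        ≤ (3 * K + 1) * δ₀ / (∑ k', a k')) := by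
  set S := ∑ k, a k with hSdef
  set T := ∑ k, ahat k with hTdef
  set D := ∑ k, δ k with hDdef
  have hDnonneg : 0 ≤ D := Finset.sum_nonneg fun k _ => hδ k
  have hTS : |T - S| ≤ D := by
    have : T - S = ∑ k, (ahat k - a k) := by
      rw [Finset.sum_sub_distrib]
    rw [this]
    calc |∑ k, (ahat k - a k)| ≤ ∑ k, |ahat k - a k| :=
          Finset.abs_sum_le_sum_abs _ _
      _ ≤ D := Finset.sum_le_sum fun k _ => hclose k
  have hT2 : S / 2 ≤ T := by
    have := abs_le.mp hTS
    linarith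
  have hTpos : 0 < T := by linarith
  have main : ∀ k, |ahat k / T - a k / S| ≤ δ k / S + 3 * D / S := by
    intro k
    have haS : a k ≤ S := Finset.single_le_sum (fun k _ => ha k) (Finset.mem_univ k)
    have hδD : δ k ≤ D := Finset.single_le_sum (fun k _ => hδ k) (Finset.mem_univ k)
    have hclosek := abs_le.mp (hclose k)
    have hTS' := abs_le.mp hTS
    have key : |ahat k * S - a k * T| ≤ δ k * S + a k * D := by
      have : ahat k * S - a k * T = (ahat k - a k) * S + a k * (S - T) := by ring
      rw [this]
      calc |(ahat k - a k) * S + a k * (S - T)|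
          ≤ |(ahat k - a k) * S| + |a k * (S - T)| := abs_add_le _ _
        _ = |ahat k - a k| * S + a k * |S - T| := by
            rw [abs_mul, abs_mul, abs_of_pos hS, abs_of_nonneg (ha k)]
        _ ≤ δ k * S + a k * D := by
            have h1 : |ahat k - a k| * S ≤ δ k * S :=
              mul_le_mul_of_nonneg_right (hclose k) hS.le
            have h2 : a k * |S - T| ≤ a k * D := by
              rw [abs_sub_comm]; exact mul_le_mul_of_nonneg_left hTS (ha k)
            linarith
    have heq : ahat k / T - a k / S = (ahat k * S - a k * T) / (T * S) := by
      field_simp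
    rw [heq, abs_div, abs_of_pos (mul_pos hTpos hS)]
    rw [div_le_iff₀ (mul_pos hTpos hS)]
    have hbound : δ k * S + a k * D ≤ (δ k / S + 3 * D / S) * (T * S) := by
      have h1 : (δ k / S + 3 * D / S) * (T * S) = (δ k + 3 * D) * T := by
        field_simp
      rw [h1]
      nlinarith [mul_le_mul_of_nonneg_left hT2 (hδ k),
        mul_le_mul_of_nonneg_left hT2 hDnonneg,
        mul_le_mul_of_nonneg_right haS hDnonneg]
    linarith [key, hbound]
  refine ⟨hTpos, main, ?_⟩
  intro δ₀ hδ₀ k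
  have hδ₀pos : 0 ≤ δ₀ := le_trans (hδ k) (hδ₀ k)
  have hDK : D ≤ K * δ₀ := by
    calc D ≤ ∑ _k : Fin K, δ₀ := Finset.sum_le_sum fun k _ => hδ₀ k
      _ = K * δ₀ := by simp [Finset.sum_const, Finset.card_univ]
  calc |ahat k / T - a k / S| ≤ δ k / S + 3 * D / S := main k
    _ ≤ (3 * K + 1) * δ₀ / S := by
        rw [← add_div, div_le_div_iff₀ hS hS]
        nlinarith [hδ₀ k]
end

section
/- Let K ≥ 2 be an integer, 𝒵 a nonempty set, and 0 < L ≤ U. Suppose g_1, …, g_K : 𝒵 → [L, U] and ĝ_1, …, ĝ_K : 𝒵 → [0, ∞) satisfy sup_{z ∈ 𝒵} |ĝ_k(z) − g_k(z)| ≤ ε_{2,k} for every k; let π = (π_1, …, π_K) and π̂ = (π̂_1, …, π̂_K) be probability vectors with |π̂_k − π_k| ≤ ε₁ for every k. Define p_k(z) = g_k(z)π_k/Σ_{k'} g_{k'}(z)π_{k'} and p̂_k(z) = ĝ_k(z)π̂_k/Σ_{k'} ĝ_{k'}(z)π̂_{k'}. If Σ_{k=1}^K (ε_{2,k} + U·ε₁)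 ≤ L/2, then p̂ is well defined and sup_{z ∈ 𝒵} |p̂_k(z) − p_k(z)| ≤ (3K + 1)·(max_k ε_{2,k} + U·ε₁)/L for every k. -/
/-- deterministic uniform ratio-perturbation lemma underlying
Theorems 1 and 2 of the paper. -/
theorem stmt_11
    (K : ℕ) (hK : 2 ≤ K)
    (𝒵 : Type*) [Nonempty 𝒵]
    (L U : ℝ) (hL : 0 < L) (hLU : L ≤ U)
    (g ghat : Fin K → 𝒵 → ℝ)
    (hg : ∀ k z, g k z ∈ Set.Icc L U)
    (hghat : ∀ k z, 0 ≤ ghat k z)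
    (ε₂ : Fin K → ℝ)
    (hclose : ∀ k z, |ghat k z - g k z| ≤ ε₂ k)
    (π πhat : Fin K → ℝ)
    (hπnn : ∀ k, 0 ≤ π k) (hπsum : ∑ k, π k = 1)
    (hπhatnn : ∀ k, 0 ≤ πhat k) (hπhatsum : ∑ k, πhat k = 1)
    (ε₁ : ℝ) (hπclose : ∀ k, |πhat k - π k| ≤ ε₁)
    (hsmall : ∑ k : Fin K, (ε₂ k + U * ε₁) ≤ L / 2) :
    (∀ z, 0 < ∑ k', ghat k' z * πhat k') ∧
    (∀ k z,
      |ghat k z * πhat k / (∑ k', ghat k' z * πhat k')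
          - g k z * π k / (∑ k', g k' z * π k')|
        ≤ (3 * K + 1) *
            ((Finset.univ.sup' (Finset.univ_nonempty_iff.mpr ⟨⟨0, by omega⟩⟩) ε₂) + U * ε₁)
            / L) := by
  obtain ⟨z₀⟩ := ‹Nonempty 𝒵›
  have hU0 : 0 < U := hL.trans_le hLU
  have hε₁ : 0 ≤ ε₁ := (abs_nonneg _).trans (hπclose ⟨0, by omega⟩)
  have hε₂ : ∀ k, 0 ≤ ε₂ k := fun k => (abs_nonneg _).trans (hclose k z₀)
  have hπhatle : ∀ k, πhat k ≤ 1 := by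
    intro k; rw [← hπhatsum]
    exact Finset.single_le_sum (fun i _ => hπhatnn i) (Finset.mem_univ k)
  have hterm : ∀ k z, |ghat k z * πhat k - g k z * π k| ≤ ε₂ k + U * ε₁ := by
    intro k z
    have h1 : ghat k z * πhat k - g k z * π k
        = (ghat k z - g k z) * πhat k + g k z * (πhat k - π k) := by ring
    rw [h1]
    refine (abs_add_le _ _).trans (add_le_add ?_ ?_)
    · rw [abs_mul, abs_of_nonneg (hπhatnn k)]
      calc |ghat k z - g k z| * πhat k ≤ ε₂ k * 1 :=
            mul_le_mul (hclose k z) (hπhatle k) (hπhatnn k) (hε₂ k)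
        _ = ε₂ k := mul_one _
    · rw [abs_mul, abs_of_nonneg (hL.le.trans (hg k z).1)]
      exact mul_le_mul (hg k z).2 (hπclose k) (abs_nonneg _) hU0.le
  have hSlb : ∀ z, L ≤ ∑ k', g k' z * π k' := by
    intro z
    calc L = ∑ k', L * π k' := by rw [← Finset.mul_sum, hπsum, mul_one]
      _ ≤ ∑ k', g k' z * π k' :=
          Finset.sum_le_sum (fun i _ => mul_le_mul_of_nonneg_right (hg i z).1 (hπnn i))
  have hdiff : ∀ z, |(∑ k', ghat k' z * πhat k') - ∑ k', g k' z * π k'|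
      ≤ ∑ k' : Fin K, (ε₂ k' + U * ε₁) := by
    intro z
    rw [← Finset.sum_sub_distrib]
    exact (Finset.abs_sum_le_sum_abs _ _).trans (Finset.sum_le_sum fun i _ => hterm i z)
  have hShat : ∀ z, L / 2 ≤ ∑ k', ghat k' z * πhat k' := by
    intro z
    have h1 := abs_le.mp ((hdiff z).trans hsmall)
    have h2 := hSlb z
    linarith [h1.1]
  refine ⟨fun z => lt_of_lt_of_le (by linarith) (hShat z), ?_⟩
  intro k z
  have hEk : ∀ k' : Fin K, ε₂ k' + U * ε₁ ≤
      (Finset.univ.sup' (Finset.univ_nonempty_iff.mpr ⟨⟨0, by omega⟩⟩) ε₂) + U * ε₁ :=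
    fun k' => add_le_add_left (Finset.le_sup' ε₂ (Finset.mem_univ k')) _
  set E := (Finset.univ.sup' (Finset.univ_nonempty_iff.mpr ⟨⟨0, by omega⟩⟩) ε₂) + U * ε₁ with hEdef
  have hE0 : 0 ≤ E := le_trans (add_nonneg (hε₂ ⟨0, by omega⟩) (mul_nonneg hU0.le hε₁)) (hEk ⟨0, by omega⟩)
  have hsum_le : ∑ k' : Fin K, (ε₂ k' + U * ε₁) ≤ K * E := by
    calc ∑ k' : Fin K, (ε₂ k' + U * ε₁) ≤ ∑ _k' : Fin K, E :=
          Finset.sum_le_sum fun i _ => hEk i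
      _ = K * E := by simp [Finset.sum_const, Finset.card_univ, nsmul_eq_mul]
  set S := ∑ k', g k' z * π k' with hSdef
  set T := ∑ k', ghat k' z * πhat k' with hTdef
  have hS : L ≤ S := hSlb z
  have hT : L / 2 ≤ T := hShat z
  have hSpos : 0 < S := lt_of_lt_of_le hL hS
  have hTpos : 0 < T := by linarith
  have key : ghat k z * πhat k / T - g k z * π k / S
      = (ghat k z * πhat k - g k z * π k) / T + (g k z * π k / S) * ((S - T) / T) := by
    field_simp
    ring
  have hbS : g k z * π k / S ≤ 1 := by
    rw [div_le_one hSpos]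
    exact Finset.single_le_sum
      (fun i _ => mul_nonneg (hL.le.trans (hg i z).1) (hπnn i)) (Finset.mem_univ k)
  have hbSnn : 0 ≤ g k z * π k / S :=
    div_nonneg (mul_nonneg (hL.le.trans (hg k z).1) (hπnn k)) hSpos.le
  have h1 : |(ghat k z * πhat k - g k z * π k) / T| ≤ E / (L / 2) := by
    rw [abs_div, abs_of_pos hTpos]
    exact div_le_div₀ hE0 ((hterm k z).trans (hEk k)) (by linarith) hT
  have h2 : |(S - T) / T| ≤ (K * E) / (L / 2) := by
    rw [abs_div, abs_of_pos hTpos, abs_sub_comm]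
    exact div_le_div₀ (by positivity) ((hdiff z).trans hsum_le) (by linarith) hT
  have hKr : (2 : ℝ) ≤ (K : ℝ) := by exact_mod_cast hK
  calc |ghat k z * πhat k / T - g k z * π k / S|
      = |(ghat k z * πhat k - g k z * π k) / T + (g k z * π k / S) * ((S - T) / T)| := by
        rw [key]
    _ ≤ |(ghat k z * πhat k - g k z * π k) / T| + |(g k z * π k / S) * ((S - T) / T)| :=
        abs_add_le _ _
    _ ≤ E / (L / 2) + 1 * ((K * E) / (L / 2)) := by
        refine add_le_add h1 ?_
        rw [abs_mul, abs_of_nonneg hbSnn]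
        exact mul_le_mul hbS h2 (abs_nonneg _) zero_le_one
    _ = (2 * K + 2) * E / L := by field_simp; ring
    _ ≤ (3 * K + 1) * E / L := by
        gcongr ?_ / L
        nlinarith
end

section
/- Let (Ω, ℱ, P) be a probability space, 𝒵 a measurable space, Z : Ω → 𝒵 and Y : Ω → {1, …, K} measurable, and let p : 𝒵 → Δ^{K−1} be a measurable map such that for every k, p_k(Z) is a version of the conditional probability P(Y = k | Z). Let p̂ : 𝒵 → Δ^{K−1} be measurable and ε ≥ 0 with |p̂_k(z) − p_k(z)| ≤ ε for every z ∈ 𝒵 and every k. Then for every k, |E[1{Y = k} | σ(p̂(Z))] − p̂_k(Z)| ≤ ε almost surely; that is, conditionally on the predicted probability vector p̂(Z), the true probability of each class is within ε of its predicted value. -/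
open MeasureTheory ProbabilityTheory

/-- a uniform pointwise bound on the prediction error turns into a
full-calibration bound: conditioned on the predicted probability vector
`p̂(Z)`, the true probability of each class is within `ε` of the predicted
value. -/
theorem stmt_15
    {Ω : Type*} [MeasurableSpace Ω] (P : Measure Ω) [IsProbabilityMeasure P]
    {𝒵 : Type*} [MeasurableSpace 𝒵]
    (K : ℕ) (hK : 1 ≤ K)
    (Z : Ω → 𝒵) (hZ : Measurable Z)
    (Y : Ω → Fin K) (hY : Measurable Y)
    (p : 𝒵 → Fin K → ℝ) (hp : Measurable p)
    (hpnn : ∀ z k, 0 ≤ p z k) (hpsum : ∀ z, ∑ k, p z k = 1)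
    (hpcond : ∀ k, (fun ω => p (Z ω) k) =ᵐ[P]
      condExp (MeasurableSpace.comap Z inferInstance) P
        (fun ω => if Y ω = k then (1 : ℝ) else 0))
    (phat : 𝒵 → Fin K → ℝ) (hphat : Measurable phat)
    (hphatnn : ∀ z k, 0 ≤ phat z k) (hphatsum : ∀ z, ∑ k, phat z k = 1)
    (ε : ℝ) (hε : 0 ≤ ε)
    (hclose : ∀ z k, |phat z k - p z k| ≤ ε) :
    ∀ k, ∀ᵐ ω ∂P,
      |condExp (MeasurableSpace.comap (fun ω => phat (Z ω)) inferInstance) P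
          (fun ω => if Y ω = k then (1 : ℝ) else 0) ω
        - phat (Z ω) k| ≤ ε := by
  intro k
  have hphatZ : Measurable (fun ω => phat (Z ω)) := hphat.comp hZ
  have hpZk : Measurable (fun ω => p (Z ω) k) := (measurable_pi_apply k).comp (hp.comp hZ)
  have hphatZk : Measurable (fun ω => phat (Z ω) k) := (measurable_pi_apply k).comp hphatZ
  have hple : ∀ z j, p z j ≤ 1 := fun z j => by
    calc p z j ≤ ∑ i, p z i := Finset.single_le_sum (fun i _ => hpnn z i) (Finset.mem_univ j)
    _ = 1 := hpsum z
  have hphatle : ∀ z j, phat z j ≤ 1 := fun z j => by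
    calc phat z j ≤ ∑ i, phat z i :=
      Finset.single_le_sum (fun i _ => hphatnn z i) (Finset.mem_univ j)
    _ = 1 := hphatsum z
  have hint_p : Integrable (fun ω => p (Z ω) k) P :=
    ⟨hpZk.aestronglyMeasurable, HasFiniteIntegral.of_bounded (C := 1)
      (Filter.Eventually.of_forall fun ω => by
        simp only [Real.norm_eq_abs, abs_le]
        exact ⟨by linarith [hpnn (Z ω) k], hple (Z ω) k⟩)⟩
  have hint_phat : Integrable (fun ω => phat (Z ω) k) P :=
    ⟨hphatZk.aestronglyMeasurable, HasFiniteIntegral.of_bounded (C := 1)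
      (Filter.Eventually.of_forall fun ω => by
        simp only [Real.norm_eq_abs, abs_le]
        exact ⟨by linarith [hphatnn (Z ω) k], hphatle (Z ω) k⟩)⟩
  have hG_le : MeasurableSpace.comap (fun ω => phat (Z ω)) inferInstance
      ≤ ‹MeasurableSpace Ω› := measurable_iff_comap_le.mp hphatZ
  have hG_le2 : MeasurableSpace.comap (fun ω => phat (Z ω)) inferInstance
      ≤ MeasurableSpace.comap Z inferInstance := by
    have : MeasurableSpace.comap (phat ∘ Z) inferInstance
        ≤ MeasurableSpace.comap Z inferInstance := by
      rw [← MeasurableSpace.comap_comp]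
      exact MeasurableSpace.comap_mono (measurable_iff_comap_le.mp hphat)
    exact this
  set 𝒢 : MeasurableSpace Ω :=
    MeasurableSpace.comap (fun ω => phat (Z ω)) inferInstance with h𝒢
  set f : Ω → ℝ := fun ω => if Y ω = k then (1 : ℝ) else 0 with hf
  have hsm : StronglyMeasurable[𝒢] (fun ω => phat (Z ω) k) := by
    have h1 : Measurable[𝒢] (fun ω => phat (Z ω)) := measurable_iff_comap_le.mpr le_rfl
    exact ((measurable_pi_apply k).comp h1).stronglyMeasurable
  have hce_phat : condExp 𝒢 P (fun ω => phat (Z ω) k) =ᵐ[P] (fun ω => phat (Z ω) k) :=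
    (condExp_of_stronglyMeasurable hG_le hsm hint_phat).symm ▸ Filter.EventuallyEq.rfl
  have htower : condExp 𝒢 P f =ᵐ[P] condExp 𝒢 P (fun ω => p (Z ω) k) := by
    calc condExp 𝒢 P f
        =ᵐ[P] condExp 𝒢 P (condExp (MeasurableSpace.comap Z inferInstance) P f) :=
          (condExp_condExp_of_le hG_le2 (measurable_iff_comap_le.mp hZ)).symm
      _ =ᵐ[P] condExp 𝒢 P (fun ω => p (Z ω) k) := condExp_congr_ae (hpcond k).symm
  have hsub : condExp 𝒢 P (fun ω => p (Z ω) k - phat (Z ω) k)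
      =ᵐ[P] condExp 𝒢 P (fun ω => p (Z ω) k) - condExp 𝒢 P (fun ω => phat (Z ω) k) :=
    condExp_sub hint_p hint_phat 𝒢
  have hbdd : ∀ᵐ ω ∂P,
      |condExp 𝒢 P (fun ω => p (Z ω) k - phat (Z ω) k) ω| ≤ (⟨ε, hε⟩ : NNReal) := by
    refine ae_bdd_condExp_of_ae_bdd (Filter.Eventually.of_forall fun ω => ?_)
    exact (abs_sub_comm _ _).trans_le (hclose (Z ω) k)
  filter_upwards [htower, hsub, hce_phat, hbdd] with ω h1 h2 h3 h4
  have key : condExp 𝒢 P f ω - phat (Z ω) k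
      = condExp 𝒢 P (fun ω => p (Z ω) k - phat (Z ω) k) ω := by
    rw [h2, h1]; simp [h3]
  rw [key]
  exact h4
end
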